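/- Let & be a continuous t-norm on [0,1], let φ be a fuzzy lower set of ([0,1],d_L) satisfying: (F2) for each c, φ(c) ≥ c⁺ implies φ(c) is idempotent, and (F3) for each non-idempotent c with φ(c⁻) > c⁻, the map x ↦ min(c⁺,φ(x)) is a flat ideal in ([c⁻,c⁺],d_L^c) valued in ([c⁻,c⁺],&,c⁺). Set K_φ = {x ∈ [0,1] : φ(x) ≥ x⁺}. Then for every fuzzy upper set ψ of ([0,1],d_L), φ⊗ψ = sup_{x∈K_φ} min(φ(x), ψ(x)). -/

import Mathlib

open Set

/-- The unit interval as a subset of `ℝ`. -/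
def I01 : Set ℝ := Set.Icc 0 1

/-- `f` is a continuous t-norm on `[0,1]`: continuous on `[0,1]²`, maps `[0,1]²` into
`[0,1]`, commutative, associative, has unit `1`, and is monotone in each argument. -/
def IsContTNorm (f : ℝ → ℝ → ℝ) : Prop :=
  ContinuousOn (fun p : ℝ × ℝ => f p.1 p.2) (I01 ×ˢ I01) ∧
  (∀ x ∈ I01, ∀ y ∈ I01, f x y ∈ I01) ∧
  (∀ x y : ℝ, f x y = f y x) ∧
  (∀ x y z : ℝ, f (f x y) z = f x (f y z)) ∧
  (∀ x ∈ I01, f x 1 = x) ∧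
  (∀ x ∈ I01, ∀ y ∈ I01, ∀ z ∈ I01, x ≤ y → f x z ≤ f y z)

/-- The implication (residuation) of a left/continuous t-norm:
`a → b = sup {q ∈ [0,1] | f a q ≤ b}`. -/
noncomputable def timp (f : ℝ → ℝ → ℝ) (a b : ℝ) : ℝ :=
  sSup {q : ℝ | q ∈ I01 ∧ f a q ≤ b}

/-- `c⁺ = inf {x ∈ [0,1] | c ≤ x, x & x = x}`. -/
noncomputable def cplus (f : ℝ → ℝ → ℝ) (c : ℝ) : ℝ :=
  sInf {x : ℝ | x ∈ I01 ∧ c ≤ x ∧ f x x = x}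

/-- `c⁻ = sup {x ∈ [0,1] | x ≤ c, x & x = x}`. -/
noncomputable def cminus (f : ℝ → ℝ → ℝ) (c : ℝ) : ℝ :=
  sSup {x : ℝ | x ∈ I01 ∧ x ≤ c ∧ f x x = x}

/-- A fuzzy lower set of `([0,1], d_L)`: `φ` maps `[0,1]` to `[0,1]` and
`φ(x) & d_L(y,x) ≤ φ(y)` where `d_L(y,x) = y → x`. -/
def IsFuzzyLowerSet (f : ℝ → ℝ → ℝ) (φ : ℝ → ℝ) : Prop :=
  (∀ x ∈ I01, φ x ∈ I01) ∧ ∀ x ∈ I01, ∀ y ∈ I01, f (φ x) (timp f y x) ≤ φ y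

/-- A fuzzy upper set of `([0,1], d_L)`: `ψ` maps `[0,1]` to `[0,1]` and
`d_L(x,y) & ψ(x) ≤ ψ(y)`. -/
def IsFuzzyUpperSet (f : ℝ → ℝ → ℝ) (ψ : ℝ → ℝ) : Prop :=
  (∀ x ∈ I01, ψ x ∈ I01) ∧ ∀ x ∈ I01, ∀ y ∈ I01, f (timp f x y) (ψ x) ≤ ψ y

/-- A fuzzy lower set of `([c⁻,c⁺], d_L^c)` valued in `([c⁻,c⁺], &, c⁺)`. -/
def IsFuzzyLowerSetOn (f : ℝ → ℝ → ℝ) (c : ℝ) (σ : ℝ → ℝ) : Prop :=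
  (∀ x ∈ Set.Icc (cminus f c) (cplus f c), σ x ∈ Set.Icc (cminus f c) (cplus f c)) ∧
  ∀ x ∈ Set.Icc (cminus f c) (cplus f c), ∀ y ∈ Set.Icc (cminus f c) (cplus f c),
    f (σ x) (min (cplus f c) (timp f y x)) ≤ σ y

/-- A fuzzy upper set of `([c⁻,c⁺], d_L^c)` valued in `([c⁻,c⁺], &, c⁺)`. -/
def IsFuzzyUpperSetOn (f : ℝ → ℝ → ℝ) (c : ℝ) (τ : ℝ → ℝ) : Prop :=
  (∀ x ∈ Set.Icc (cminus f c) (cplus f c), τ x ∈ Set.Icc (cminus f c) (cplus f c)) ∧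
  ∀ x ∈ Set.Icc (cminus f c) (cplus f c), ∀ y ∈ Set.Icc (cminus f c) (cplus f c),
    f (min (cplus f c) (timp f x y)) (τ x) ≤ τ y

/-- The tensor product in `([c⁻,c⁺], &, c⁺)`. -/
noncomputable def tensorOn (f : ℝ → ℝ → ℝ) (c : ℝ) (σ τ : ℝ → ℝ) : ℝ :=
  sSup ((fun x => f (σ x) (τ x)) '' Set.Icc (cminus f c) (cplus f c))

/-- A flat ideal in `([c⁻,c⁺], d_L^c)` valued in `([c⁻,c⁺], &, c⁺)`: an inhabited
fuzzy lower set `σ` (`sup σ = c⁺`, the unit) that is flat. -/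
def IsFlatIdealOn (f : ℝ → ℝ → ℝ) (c : ℝ) (σ : ℝ → ℝ) : Prop :=
  IsFuzzyLowerSetOn f c σ ∧
  cplus f c ≤ sSup (σ '' Set.Icc (cminus f c) (cplus f c)) ∧
  ∀ τ₁ τ₂ : ℝ → ℝ, IsFuzzyUpperSetOn f c τ₁ → IsFuzzyUpperSetOn f c τ₂ →
    tensorOn f c σ (fun x => min (τ₁ x) (τ₂ x)) =
      min (tensorOn f c σ τ₁) (tensorOn f c σ τ₂)

open Filter Topology

namespace TN

variable {f : ℝ → ℝ → ℝ}

lemma zero_mem : (0:ℝ) ∈ I01 := by simp [I01]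
lemma one_mem : (1:ℝ) ∈ I01 := by simp [I01]

lemma mem_iff {x : ℝ} : x ∈ I01 ↔ 0 ≤ x ∧ x ≤ 1 := by simp [I01]

lemma fmem (hf : IsContTNorm f) {x y : ℝ} (hx : x ∈ I01) (hy : y ∈ I01) : f x y ∈ I01 :=
  hf.2.1 x hx y hy

lemma fcomm (hf : IsContTNorm f) (x y : ℝ) : f x y = f y x := hf.2.2.1 x y

lemma fassoc (hf : IsContTNorm f) (x y z : ℝ) : f (f x y) z = f x (f y z) := hf.2.2.2.1 x y z

lemma fone (hf : IsContTNorm f) {x : ℝ} (hx : x ∈ I01) : f x 1 = x := hf.2.2.2.2.1 x hx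

lemma one_f (hf : IsContTNorm f) {x : ℝ} (hx : x ∈ I01) : f 1 x = x := by
  rw [fcomm hf]; exact fone hf hx

lemma fmono1 (hf : IsContTNorm f) {x y z : ℝ} (hx : x ∈ I01) (hy : y ∈ I01) (hz : z ∈ I01)
    (h : x ≤ y) : f x z ≤ f y z := hf.2.2.2.2.2 x hx y hy z hz h

lemma fmono2 (hf : IsContTNorm f) {x y y' : ℝ} (hx : x ∈ I01) (hy : y ∈ I01) (hy' : y' ∈ I01)
    (h : y ≤ y') : f x y ≤ f x y' := by
  rw [fcomm hf x y, fcomm hf x y']; exact fmono1 hf hy hy' hx h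

lemma f_le_left (hf : IsContTNorm f) {x y : ℝ} (hx : x ∈ I01) (hy : y ∈ I01) : f x y ≤ x := by
  calc f x y ≤ f x 1 := fmono2 hf hx hy one_mem hy.2
  _ = x := fone hf hx

lemma f_le_right (hf : IsContTNorm f) {x y : ℝ} (hx : x ∈ I01) (hy : y ∈ I01) : f x y ≤ y := by
  rw [fcomm hf]; exact f_le_left hf hy hx

lemma f_zero (hf : IsContTNorm f) {x : ℝ} (hx : x ∈ I01) : f x 0 = 0 :=
  le_antisymm (f_le_right hf hx zero_mem) (fmem hf hx zero_mem).1

lemma fmono (hf : IsContTNorm f) {x x' y y' : ℝ} (hx : x ∈ I01) (hx' : x' ∈ I01)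
    (hy : y ∈ I01) (hy' : y' ∈ I01) (h1 : x ≤ x') (h2 : y ≤ y') : f x y ≤ f x' y' :=
  le_trans (fmono1 hf hx hx' hy h1) (fmono2 hf hx' hy hy' h2)

/-- continuity of `fun q => f a q` on `I01` -/
lemma contOn2 (hf : IsContTNorm f) {a : ℝ} (ha : a ∈ I01) :
    ContinuousOn (fun q => f a q) I01 := by
  have : (fun q => f a q) = (fun p : ℝ × ℝ => f p.1 p.2) ∘ (fun q => (a, q)) := rfl
  rw [this]
  exact hf.1.comp (Continuous.continuousOn (by continuity)) (fun q hq => ⟨ha, hq⟩)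

/-- sequential continuity -/
lemma ftendsto (hf : IsContTNorm f) {a b : ℝ} (ha : a ∈ I01) (hb : b ∈ I01)
    {xn yn : ℕ → ℝ} (hxn : ∀ n, xn n ∈ I01) (hyn : ∀ n, yn n ∈ I01)
    (hx : Tendsto xn atTop (𝓝 a)) (hy : Tendsto yn atTop (𝓝 b)) :
    Tendsto (fun n => f (xn n) (yn n)) atTop (𝓝 (f a b)) := by
  have hc : ContinuousWithinAt (fun p : ℝ × ℝ => f p.1 p.2) (I01 ×ˢ I01) (a, b) :=
    hf.1 (a, b) ⟨ha, hb⟩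
  have hten : Tendsto (fun n => (xn n, yn n)) atTop (𝓝[I01 ×ˢ I01] (a, b)) := by
    apply tendsto_nhdsWithin_of_tendsto_nhds_of_eventually_within
    · exact hx.prodMk_nhds hy
    · exact Eventually.of_forall (fun n => ⟨hxn n, hyn n⟩)
  exact hc.tendsto.comp hten

section timp

lemma timpSet_nonempty (hf : IsContTNorm f) {a b : ℝ} (ha : a ∈ I01) (hb : 0 ≤ b) :
    ({q : ℝ | q ∈ I01 ∧ f a q ≤ b}).Nonempty :=
  ⟨0, zero_mem, by rw [f_zero hf ha]; exact hb⟩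

lemma timpSet_bdd {a b : ℝ} : BddAbove {q : ℝ | q ∈ I01 ∧ f a q ≤ b} :=
  ⟨1, fun q hq => hq.1.2⟩

lemma timp_mem (hf : IsContTNorm f) {a b : ℝ} (ha : a ∈ I01) (hb : 0 ≤ b) :
    timp f a b ∈ I01 := by
  constructor
  · exact le_csSup timpSet_bdd ⟨zero_mem, by rw [f_zero hf ha]; exact hb⟩
  · exact csSup_le (timpSet_nonempty hf ha hb) (fun q hq => hq.1.2)

lemma f_timp_le (hf : IsContTNorm f) {a b : ℝ} (ha : a ∈ I01) (hb : 0 ≤ b) :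
    f a (timp f a b) ≤ b := by
  have hS : {q : ℝ | q ∈ I01 ∧ f a q ≤ b} = I01 ∩ (fun q => f a q) ⁻¹' (Iic b) := by
    ext q; simp [and_comm]
  have hclosed : IsClosed {q : ℝ | q ∈ I01 ∧ f a q ≤ b} := by
    rw [hS]
    exact (contOn2 hf ha).preimage_isClosed_of_isClosed (isClosed_Icc) isClosed_Iic
  have hcomp : IsCompact {q : ℝ | q ∈ I01 ∧ f a q ≤ b} :=
    (isCompact_Icc (a := (0:ℝ)) (b := 1)).of_isClosed_subset hclosed (fun q hq => hq.1)
  have := hcomp.sSup_mem (timpSet_nonempty hf ha hb)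
  exact this.2

lemma le_timp (hf : IsContTNorm f) {a b q : ℝ} (hq : q ∈ I01) (h : f a q ≤ b) :
    q ≤ timp f a b := le_csSup timpSet_bdd ⟨hq, h⟩

lemma f_le_of_le_timp (hf : IsContTNorm f) {a b q : ℝ} (ha : a ∈ I01) (hq : q ∈ I01)
    (hb : 0 ≤ b) (h : q ≤ timp f a b) : f a q ≤ b :=
  le_trans (fmono2 hf ha hq (timp_mem hf ha hb) h) (f_timp_le hf ha hb)

lemma timp_one_of_le (hf : IsContTNorm f) {a b : ℝ} (ha : a ∈ I01) (h : a ≤ b) :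
    timp f a b = 1 := by
  apply le_antisymm
  · exact csSup_le ⟨1, one_mem, by rw [fone hf ha]; exact h⟩ (fun q hq => hq.1.2)
  · exact le_csSup timpSet_bdd ⟨one_mem, by rw [fone hf ha]; exact h⟩

lemma self_le_timp (hf : IsContTNorm f) {a x : ℝ} (ha : a ∈ I01) (hx : x ∈ I01) :
    x ≤ timp f a x := le_timp hf hx (f_le_right hf ha hx)

lemma timp_mono (hf : IsContTNorm f) {a b b' : ℝ} (ha : a ∈ I01) (hb : 0 ≤ b) (h : b ≤ b') :
    timp f a b ≤ timp f a b' :=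
  csSup_le_csSup timpSet_bdd (timpSet_nonempty hf ha hb)
    (fun q hq => ⟨hq.1, le_trans hq.2 h⟩)

end timp

/-- idempotents act as min -/
lemma f_idem_min (hf : IsContTNorm f) {e x : ℝ} (he : e ∈ I01) (hee : f e e = e)
    (hx : x ∈ I01) : f e x = min e x := by
  rcases le_total e x with h | h
  · rw [min_eq_left h]
    refine le_antisymm (f_le_left hf he hx) ?_
    calc e = f e e := hee.symm
    _ ≤ f e x := fmono2 hf he he hx h
  · rw [min_eq_right h]
    refine le_antisymm (f_le_right hf he hx) ?_
    -- IVT: ∃ s ∈ Icc 0 e, f e s = x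
    have hsub : Icc (0:ℝ) e ⊆ I01 := Icc_subset_Icc le_rfl he.2
    have hIVT := intermediate_value_Icc (a := (0:ℝ)) (b := e) he.1
      ((contOn2 hf he).mono hsub)
    have hx' : x ∈ Icc (f e 0) (f e e) := by
      rw [f_zero hf he, hee]; exact ⟨hx.1, h⟩
    obtain ⟨s, hs, hfs⟩ := hIVT hx'
    simp only [] at hfs
    calc x = f e s := hfs.symm
    _ = f (f e e) s := by rw [hee]
    _ = f e (f e s) := fassoc hf e e s
    _ ≤ f e x := le_of_eq (by rw [show f e s = x from hfs])

section idem

lemma f_one_one (hf : IsContTNorm f) : f 1 1 = 1 := fone hf one_mem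
lemma f_zero_zero (hf : IsContTNorm f) : f 0 0 = 0 := f_zero hf zero_mem

lemma idem_closed (hf : IsContTNorm f) : IsClosed {x : ℝ | x ∈ I01 ∧ f x x = x} := by
  have h : {x : ℝ | x ∈ I01 ∧ f x x = x}
      = I01 ∩ (fun x => f x x - x) ⁻¹' ({0} : Set ℝ) := by
    ext x
    simp only [Set.mem_inter_iff, Set.mem_preimage, Set.mem_singleton_iff, Set.mem_setOf_eq,
      sub_eq_zero]
  rw [h]
  have hcont : ContinuousOn (fun x => f x x - x) I01 := by
    have h1 : ContinuousOn (fun x : ℝ => f x x) I01 := by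
      have : (fun x : ℝ => f x x) = (fun p : ℝ × ℝ => f p.1 p.2) ∘ (fun x : ℝ => (x, x)) := rfl
      rw [this]
      exact hf.1.comp (Continuous.continuousOn (by continuity)) (fun x hx => ⟨hx, hx⟩)
    exact h1.sub continuousOn_id
  exact hcont.preimage_isClosed_of_isClosed isClosed_Icc isClosed_singleton

lemma cplusSet_closed (hf : IsContTNorm f) (c : ℝ) :
    IsClosed {x : ℝ | x ∈ I01 ∧ c ≤ x ∧ f x x = x} := by
  have h : {x : ℝ | x ∈ I01 ∧ c ≤ x ∧ f x x = x}
      = {x : ℝ | x ∈ I01 ∧ f x x = x} ∩ Ici c := by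
    ext x; simp only [Set.mem_inter_iff, Set.mem_setOf_eq, Set.mem_Ici]; tauto
  rw [h]; exact (idem_closed hf).inter isClosed_Ici

lemma cminusSet_closed (hf : IsContTNorm f) (c : ℝ) :
    IsClosed {x : ℝ | x ∈ I01 ∧ x ≤ c ∧ f x x = x} := by
  have h : {x : ℝ | x ∈ I01 ∧ x ≤ c ∧ f x x = x}
      = {x : ℝ | x ∈ I01 ∧ f x x = x} ∩ Iic c := by
    ext x; simp only [Set.mem_inter_iff, Set.mem_setOf_eq, Set.mem_Iic]; tauto
  rw [h]; exact (idem_closed hf).inter isClosed_Iic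

lemma cplus_mem (hf : IsContTNorm f) {c : ℝ} (hc : c ∈ I01) :
    cplus f c ∈ {x : ℝ | x ∈ I01 ∧ c ≤ x ∧ f x x = x} := by
  have hne : ({x : ℝ | x ∈ I01 ∧ c ≤ x ∧ f x x = x}).Nonempty :=
    ⟨1, one_mem, hc.2, f_one_one hf⟩
  have hcomp : IsCompact {x : ℝ | x ∈ I01 ∧ c ≤ x ∧ f x x = x} :=
    (isCompact_Icc (a := (0:ℝ)) (b := 1)).of_isClosed_subset (cplusSet_closed hf c)
      (fun x hx => hx.1)
  exact hcomp.sInf_mem hne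

lemma cminus_mem (hf : IsContTNorm f) {c : ℝ} (hc : c ∈ I01) :
    cminus f c ∈ {x : ℝ | x ∈ I01 ∧ x ≤ c ∧ f x x = x} := by
  have hne : ({x : ℝ | x ∈ I01 ∧ x ≤ c ∧ f x x = x}).Nonempty :=
    ⟨0, zero_mem, hc.1, f_zero_zero hf⟩
  have hcomp : IsCompact {x : ℝ | x ∈ I01 ∧ x ≤ c ∧ f x x = x} :=
    (isCompact_Icc (a := (0:ℝ)) (b := 1)).of_isClosed_subset (cminusSet_closed hf c)
      (fun x hx => hx.1)
  exact hcomp.sSup_mem hne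

lemma le_cplus (hf : IsContTNorm f) {c : ℝ} (hc : c ∈ I01) : c ≤ cplus f c :=
  le_csInf ⟨1, one_mem, hc.2, f_one_one hf⟩ (fun x hx => hx.2.1)

lemma cminus_le (hf : IsContTNorm f) {c : ℝ} (hc : c ∈ I01) : cminus f c ≤ c :=
  csSup_le ⟨0, zero_mem, hc.1, f_zero_zero hf⟩ (fun x hx => hx.2.1)

lemma cplus_le (hf : IsContTNorm f) {c e : ℝ} (he : e ∈ I01) (hce : c ≤ e)
    (hee : f e e = e) : cplus f c ≤ e :=
  csInf_le ⟨0, fun x hx => hx.1.1⟩ ⟨he, hce, hee⟩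

lemma le_cminus (hf : IsContTNorm f) {c e : ℝ} (he : e ∈ I01) (hce : e ≤ c)
    (hee : f e e = e) : e ≤ cminus f c :=
  le_csSup ⟨1, fun x hx => hx.1.2⟩ ⟨he, hce, hee⟩

lemma cplus_of_idem (hf : IsContTNorm f) {c : ℝ} (hc : c ∈ I01) (hcc : f c c = c) :
    cplus f c = c :=
  le_antisymm (cplus_le hf hc le_rfl hcc) (le_cplus hf hc)

lemma no_idem_between (hf : IsContTNorm f) {c e : ℝ} (hc : c ∈ I01) (he : e ∈ I01)
    (hee : f e e = e) (h1 : cminus f c < e) (h2 : e < cplus f c) : False := by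
  rcases le_total e c with h | h
  · exact absurd (le_cminus hf he h hee) (not_le_of_gt h1)
  · exact absurd (cplus_le hf he h hee) (not_le_of_gt h2)

/-- powers of `a` converge to an idempotent: if `f z a = z` then `z ≤ e ≤ a` for some
idempotent `e`. -/
lemma exists_idem_between (hf : IsContTNorm f) {a z : ℝ} (ha : a ∈ I01) (hz : z ∈ I01)
    (h : f z a = z) : ∃ e, e ∈ I01 ∧ f e e = e ∧ z ≤ e ∧ e ≤ a := by
  -- powers
  let p : ℕ → ℝ := fun n => Nat.rec a (fun _ q => f q a) n
  have hp0 : p 0 = a := rfl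
  have hpsucc : ∀ n, p (n + 1) = f (p n) a := fun n => rfl
  have hpmem : ∀ n, p n ∈ I01 := by
    intro n; induction n with
    | zero => exact ha
    | succ n ih => rw [hpsucc]; exact fmem hf ih ha
  have hpanti : ∀ n, p (n + 1) ≤ p n := by
    intro n; rw [hpsucc]; exact f_le_left hf (hpmem n) ha
  have hpanti' : Antitone p := antitone_nat_of_succ_le hpanti
  have hbdd : BddBelow (Set.range p) := ⟨0, fun x ⟨n, hn⟩ => hn ▸ (hpmem n).1⟩
  set e := ⨅ n, p n with he_def
  have hlim : Tendsto p atTop (𝓝 e) := tendsto_atTop_ciInf hpanti' hbdd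
  have hemem : e ∈ I01 := by
    constructor
    · exact le_ciInf (fun n => (hpmem n).1)
    · exact le_trans (ciInf_le hbdd 0) ha.2
  have hadd : ∀ n m, f (p n) (p m) = p (n + m + 1) := by
    intro n m; induction m with
    | zero => rfl
    | succ m ih =>
      show f (p n) (f (p m) a) = p (n + (m + 1) + 1)
      rw [← fassoc hf, ih]
      rfl
  have hee : f e e = e := by
    have h1 : Tendsto (fun n => f (p n) (p n)) atTop (𝓝 (f e e)) :=
      ftendsto hf hemem hemem hpmem hpmem hlim hlim
    have h2 : Tendsto (fun n => f (p n) (p n)) atTop (𝓝 e) := by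
      have : (fun n => f (p n) (p n)) = fun n => p (n + n + 1) := by
        funext n; exact hadd n n
      rw [this]
      have hg : Tendsto (fun n : ℕ => n + n + 1) atTop atTop :=
        tendsto_atTop_atTop.mpr (fun b => ⟨b, fun n hn => by omega⟩)
      exact hlim.comp hg
    exact tendsto_nhds_unique h1 h2
  have hze : ∀ n, f z (p n) = z := by
    intro n; induction n with
    | zero => exact h
    | succ n ih => rw [hpsucc, ← fassoc hf, ih, h]
  have hfze : f z e = z := by
    have h1 : Tendsto (fun n => f z (p n)) atTop (𝓝 (f z e)) :=
      ftendsto hf hz hemem (fun _ => hz) hpmem tendsto_const_nhds hlim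
    have h2 : Tendsto (fun n => f z (p n)) atTop (𝓝 z) := by
      simp only [hze]; exact tendsto_const_nhds
    exact tendsto_nhds_unique h1 h2
  refine ⟨e, hemem, hee, ?_, le_trans (ciInf_le hbdd 0) (le_of_eq hp0)⟩
  have hmin : min e z = z := by
    rw [← f_idem_min hf hemem hee hz, fcomm hf]; exact hfze
  exact min_eq_right_iff.mp hmin

end idem

/-! ### block lemmas -/

def plat (f : ℝ → ℝ → ℝ) (c : ℝ) (σ : ℝ → ℝ) : Set ℝ :=
  {x | x ∈ Set.Icc (cminus f c) (cplus f c) ∧ σ x = cplus f c}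

noncomputable def usup (f : ℝ → ℝ → ℝ) (c : ℝ) (σ : ℝ → ℝ) : ℝ := sSup (plat f c σ)

section block

variable (hf : IsContTNorm f) {c : ℝ} (hc : c ∈ I01)
include hf hc

lemma bB_mem_b : cminus f c ∈ I01 := (cminus_mem hf hc).1
lemma bB_mem_B : cplus f c ∈ I01 := (cplus_mem hf hc).1
lemma b_le_B : cminus f c ≤ cplus f c := le_trans (cminus_le hf hc) (le_cplus hf hc)
lemma b_idem : f (cminus f c) (cminus f c) = cminus f c := (cminus_mem hf hc).2.2
lemma B_idem : f (cplus f c) (cplus f c) = cplus f c := (cplus_mem hf hc).2.2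

lemma Icc_sub_I01 : Set.Icc (cminus f c) (cplus f c) ⊆ I01 := fun x hx =>
  ⟨le_trans (bB_mem_b hf hc).1 hx.1, le_trans hx.2 (bB_mem_B hf hc).2⟩

lemma b_lt_c (hni : f c c ≠ c) : cminus f c < c :=
  lt_of_le_of_ne (cminus_le hf hc) (fun h => hni (h ▸ (cminus_mem hf hc).2.2))

lemma c_lt_B (hni : f c c ≠ c) : c < cplus f c :=
  lt_of_le_of_ne (le_cplus hf hc) (fun h => hni (h ▸ (cplus_mem hf hc).2.2))

/-- within a block, multiplying by `q < c⁺` strictly decreases -/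
lemma blk_lt (hni : f c c ≠ c) {y q : ℝ} (hy : y ∈ Set.Icc (cminus f c) (cplus f c))
    (hby : cminus f c < y) (hq : q ∈ I01) (hqB : q < cplus f c) : f y q < y := by
  have hyI : y ∈ I01 := Icc_sub_I01 hf hc hy
  rcases lt_or_eq_of_le (f_le_left hf hyI hq) with h | h
  · exact h
  · exfalso
    obtain ⟨e, heI, hee, hye, heq⟩ := exists_idem_between hf hq hyI h
    exact no_idem_between hf hc heI hee (lt_of_lt_of_le hby hye)
      (lt_of_le_of_lt heq hqB)

variable {σ : ℝ → ℝ}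

lemma sigma_anti (hσ : IsFlatIdealOn f c σ) {x y : ℝ}
    (hx : x ∈ Set.Icc (cminus f c) (cplus f c)) (hy : y ∈ Set.Icc (cminus f c) (cplus f c))
    (hxy : x ≤ y) : σ y ≤ σ x := by
  have h := hσ.1.2 y hy x hx
  rwa [timp_one_of_le hf (Icc_sub_I01 hf hc hx) hxy, min_eq_left (bB_mem_B hf hc).2,
    fcomm hf, f_idem_min hf (bB_mem_B hf hc) (B_idem hf hc)
      (Icc_sub_I01 hf hc (hσ.1.1 y hy)),
    min_eq_right (hσ.1.1 y hy).2] at h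

lemma tensor_bdd (hσm : ∀ x ∈ Set.Icc (cminus f c) (cplus f c), σ x ∈ I01)
    {τ : ℝ → ℝ} (hτ : ∀ x ∈ Set.Icc (cminus f c) (cplus f c), τ x ∈ I01) :
    BddAbove ((fun x => f (σ x) (τ x)) '' Set.Icc (cminus f c) (cplus f c)) := by
  refine ⟨1, ?_⟩
  rintro v ⟨x, hx, rfl⟩
  exact (fmem hf (hσm x hx) (hτ x hx)).2

lemma sigma_bottom (hσ : IsFlatIdealOn f c σ) : σ (cminus f c) = cplus f c := by
  have hb : cminus f c ∈ Set.Icc (cminus f c) (cplus f c) := ⟨le_rfl, b_le_B hf hc⟩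
  refine le_antisymm (hσ.1.1 _ hb).2 ?_
  refine le_trans hσ.2.1 (csSup_le ⟨σ (cminus f c), ⟨_, hb, rfl⟩⟩ ?_)
  rintro v ⟨x, hx, rfl⟩
  exact sigma_anti hf hc hσ hb hx hx.1

lemma plat_nonempty (hσ : IsFlatIdealOn f c σ) : (plat f c σ).Nonempty :=
  ⟨cminus f c, ⟨le_rfl, b_le_B hf hc⟩, sigma_bottom hf hc hσ⟩

omit hf hc in
lemma plat_bdd : BddAbove (plat f c σ) := ⟨cplus f c, fun x hx => hx.1.2⟩

lemma usup_mem_Icc (hσ : IsFlatIdealOn f c σ) :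
    usup f c σ ∈ Set.Icc (cminus f c) (cplus f c) := by
  constructor
  · exact le_csSup plat_bdd ⟨⟨le_rfl, b_le_B hf hc⟩, sigma_bottom hf hc hσ⟩
  · exact csSup_le (plat_nonempty hf hc hσ) (fun x hx => hx.1.2)

lemma plat_down (hσ : IsFlatIdealOn f c σ) {x x' : ℝ}
    (hx : x ∈ Set.Icc (cminus f c) (cplus f c)) (hx' : x' ∈ plat f c σ) (hxx : x ≤ x') :
    σ x = cplus f c :=
  le_antisymm (hσ.1.1 x hx).2 (hx'.2 ▸ sigma_anti hf hc hσ hx hx'.1 hxx)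

lemma minB_timp_mem {x y : ℝ} (hx : x ∈ I01) (hy : 0 ≤ y) :
    min (cplus f c) (timp f x y) ∈ I01 :=
  ⟨le_min (bB_mem_B hf hc).1 (timp_mem hf hx hy).1,
   le_trans (min_le_left _ _) (bB_mem_B hf hc).2⟩

lemma sigma_usup (hσ : IsFlatIdealOn f c σ) (hni : f c c ≠ c) :
    σ (usup f c σ) = cplus f c := by
  have huIcc : usup f c σ ∈ Set.Icc (cminus f c) (cplus f c) := usup_mem_Icc hf hc hσ
  have huI : usup f c σ ∈ I01 := Icc_sub_I01 hf hc huIcc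
  rcases eq_or_lt_of_le huIcc.1 with h | h
  · rw [← h]; exact sigma_bottom hf hc hσ
  · refine le_antisymm (hσ.1.1 _ huIcc).2 ?_
    refine le_of_forall_lt_imp_le_of_dense ?_
    intro q hq
    rcases le_or_gt q (cminus f c) with hqb | hqb
    · exact le_trans hqb (hσ.1.1 _ huIcc).1
    · have hqI : q ∈ I01 := ⟨le_trans (bB_mem_b hf hc).1 hqb.le,
        le_trans hq.le (bB_mem_B hf hc).2⟩
      have hz : f (usup f c σ) q < usup f c σ := blk_lt hf hc hni huIcc h hqI hq
      obtain ⟨x, hxP, hzx⟩ := exists_lt_of_lt_csSup (plat_nonempty hf hc hσ) hz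
      have htq : q ≤ timp f (usup f c σ) x := le_timp hf hqI (le_of_lt hzx)
      have hlow := hσ.1.2 x hxP.1 _ huIcc
      rw [hxP.2] at hlow
      have hmI : min (cplus f c) (timp f (usup f c σ) x) ∈ I01 :=
        minB_timp_mem hf hc huI (le_trans (bB_mem_b hf hc).1 hxP.1.1)
      rw [f_idem_min hf (bB_mem_B hf hc) (B_idem hf hc) hmI] at hlow
      exact le_trans (le_min hq.le (le_min hq.le htq)) hlow

lemma upper_const {k : ℝ} (hk : k ∈ Set.Icc (cminus f c) (cplus f c)) :
    IsFuzzyUpperSetOn f c (fun _ => k) := by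
  refine ⟨fun x _ => hk, fun x hx y hy => ?_⟩
  exact f_le_right hf (minB_timp_mem hf hc (Icc_sub_I01 hf hc hx)
    (le_trans (bB_mem_b hf hc).1 hy.1)) (Icc_sub_I01 hf hc hk)

lemma upper_principal {y : ℝ} (hy : y ∈ Set.Icc (cminus f c) (cplus f c)) :
    IsFuzzyUpperSetOn f c (fun x => min (cplus f c) (timp f y x)) := by
  have hyI : y ∈ I01 := Icc_sub_I01 hf hc hy
  constructor
  · intro x hx
    exact ⟨le_min (b_le_B hf hc) (le_trans hx.1 (self_le_timp hf hyI (Icc_sub_I01 hf hc hx))),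
      min_le_left _ _⟩
  · intro x hx x' hx'
    have hxI : x ∈ I01 := Icc_sub_I01 hf hc hx
    have hx'I : x' ∈ I01 := Icc_sub_I01 hf hc hx'
    have hm1 : min (cplus f c) (timp f x x') ∈ I01 := minB_timp_mem hf hc hxI hx'I.1
    have hm2 : min (cplus f c) (timp f y x) ∈ I01 := minB_timp_mem hf hc hyI hxI.1
    refine le_min (le_trans (f_le_right hf hm1 hm2) (min_le_left _ _)) ?_
    refine le_timp hf (fmem hf hm1 hm2) ?_
    have hrw : f y (f (min (cplus f c) (timp f x x')) (min (cplus f c) (timp f y x)))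
        = f (f y (min (cplus f c) (timp f y x))) (min (cplus f c) (timp f x x')) := by
      rw [fcomm hf (min (cplus f c) (timp f x x')) (min (cplus f c) (timp f y x)),
        ← fassoc hf]
    rw [hrw]
    have h1 : f y (min (cplus f c) (timp f y x)) ≤ x :=
      le_trans (fmono2 hf hyI hm2 (timp_mem hf hyI hxI.1) (min_le_right _ _))
        (f_timp_le hf hyI hxI.1)
    calc f (f y (min (cplus f c) (timp f y x))) (min (cplus f c) (timp f x x'))
        ≤ f x (min (cplus f c) (timp f x x')) :=
          fmono1 hf (fmem hf hyI hm2) hxI hm1 h1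
      _ ≤ f x (timp f x x') :=
          fmono2 hf hxI hm1 (timp_mem hf hxI hx'I.1) (min_le_right _ _)
      _ ≤ x' := f_timp_le hf hxI hx'I.1

lemma tensor_nonempty {τ : ℝ → ℝ} :
    ((fun x => f (σ x) (τ x)) '' Set.Icc (cminus f c) (cplus f c)).Nonempty := by
  exact ⟨_, ⟨cminus f c, ⟨le_rfl, b_le_B hf hc⟩, rfl⟩⟩

lemma tensor_principal (hσ : IsFlatIdealOn f c σ) {y : ℝ}
    (hy : y ∈ Set.Icc (cminus f c) (cplus f c)) :
    tensorOn f c σ (fun x => min (cplus f c) (timp f y x)) = σ y := by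
  have hyI : y ∈ I01 := Icc_sub_I01 hf hc hy
  have hσm : ∀ x ∈ Set.Icc (cminus f c) (cplus f c), σ x ∈ I01 :=
    fun x hx => Icc_sub_I01 hf hc (hσ.1.1 x hx)
  apply le_antisymm
  · refine csSup_le (tensor_nonempty hf hc) ?_
    rintro v ⟨x, hx, rfl⟩
    exact hσ.1.2 x hx y hy
  · refine le_csSup (tensor_bdd hf hc hσm
      (fun x hx => minB_timp_mem hf hc hyI (Icc_sub_I01 hf hc hx).1)) ⟨y, hy, ?_⟩
    show f (σ y) (min (cplus f c) (timp f y y)) = σ y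
    rw [timp_one_of_le hf hyI le_rfl, min_eq_left (bB_mem_B hf hc).2, fcomm hf,
      f_idem_min hf (bB_mem_B hf hc) (B_idem hf hc) (hσm y hy),
      min_eq_right (hσ.1.1 y hy).2]

lemma tensor_const (hσ : IsFlatIdealOn f c σ) {k : ℝ}
    (hk : k ∈ Set.Icc (cminus f c) (cplus f c)) :
    tensorOn f c σ (fun _ => k) = k := by
  have hkI : k ∈ I01 := Icc_sub_I01 hf hc hk
  have hσm : ∀ x ∈ Set.Icc (cminus f c) (cplus f c), σ x ∈ I01 :=
    fun x hx => Icc_sub_I01 hf hc (hσ.1.1 x hx)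
  apply le_antisymm
  · refine csSup_le (tensor_nonempty hf hc) ?_
    rintro v ⟨x, hx, rfl⟩
    exact f_le_right hf (hσm x hx) hkI
  · refine le_csSup (tensor_bdd hf hc hσm (fun x _ => hkI)) ⟨cminus f c,
      ⟨le_rfl, b_le_B hf hc⟩, ?_⟩
    show f (σ (cminus f c)) k = k
    rw [sigma_bottom hf hc hσ, f_idem_min hf (bB_mem_B hf hc) (B_idem hf hc) hkI,
      min_eq_right hk.2]

/-- THE KEY LEMMA: for a flat ideal, above the plateau `f y (σ y) ≤ u`. -/
lemma key_lemma (hσ : IsFlatIdealOn f c σ) (hni : f c c ≠ c) {y : ℝ}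
    (hy : y ∈ Set.Icc (cminus f c) (cplus f c)) (huy : usup f c σ < y) :
    f y (σ y) ≤ usup f c σ := by
  have hyI : y ∈ I01 := Icc_sub_I01 hf hc hy
  have hσm : ∀ x ∈ Set.Icc (cminus f c) (cplus f c), σ x ∈ I01 :=
    fun x hx => Icc_sub_I01 hf hc (hσ.1.1 x hx)
  have hσyIcc : σ y ∈ Set.Icc (cminus f c) (cplus f c) := hσ.1.1 y hy
  have hσyI : σ y ∈ I01 := Icc_sub_I01 hf hc hσyIcc
  have huIcc := usup_mem_Icc hf hc hσ
  -- main sublemma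
  have SL : ∀ k, k ∈ Set.Icc (cminus f c) (cplus f c) → usup f c σ < k → k ≤ σ y →
      f y k ≤ usup f c σ := by
    intro k hkIcc huk hkσ
    have hkI : k ∈ I01 := Icc_sub_I01 hf hc hkIcc
    by_contra hw
    push_neg at hw
    -- flatness instance
    have hflat := hσ.2.2 (fun x => min (cplus f c) (timp f y x)) (fun _ => k)
      (upper_principal hf hc hy) (upper_const hf hc hkIcc)
    rw [tensor_principal hf hc hσ hy, tensor_const hf hc hσ hkIcc,
      min_eq_right hkσ] at hflat
    -- hflat : tensorOn f c σ (fun x => min (min B (timp y x)) k) = k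
    set g : ℝ → ℝ := fun x => f (σ x) (min (min (cplus f c) (timp f y x)) k) with hg
    have hgmem : ∀ x ∈ Set.Icc (cminus f c) (cplus f c),
        min (min (cplus f c) (timp f y x)) k ∈ I01 := by
      intro x hx
      exact ⟨le_min (minB_timp_mem hf hc hyI (Icc_sub_I01 hf hc hx).1).1 hkI.1,
        le_trans (min_le_right _ _) hkI.2⟩
    have hgle : ∀ x ∈ Set.Icc (cminus f c) (cplus f c), g x ≤ k :=
      fun x hx => le_trans (f_le_right hf (hσm x hx) (hgmem x hx)) (min_le_right _ _)
    have hsup : sSup (g '' Set.Icc (cminus f c) (cplus f c)) = k := hflat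
    -- extract a sequence approaching the sup
    have hseq : ∀ n : ℕ, ∃ x, x ∈ Set.Icc (cminus f c) (cplus f c) ∧
        k - 1/(n+1) < g x := by
      intro n
      have hlt : k - 1/(n+1) < sSup (g '' Set.Icc (cminus f c) (cplus f c)) := by
        rw [hsup]
        have : (0:ℝ) < 1/(n+1) := by positivity
        linarith
      have hne : (g '' Set.Icc (cminus f c) (cplus f c)).Nonempty :=
        ⟨g (cminus f c), Set.mem_image_of_mem g ⟨le_rfl, b_le_B hf hc⟩⟩
      obtain ⟨v, ⟨x, hx, rfl⟩, hv⟩ := exists_lt_of_lt_csSup hne hlt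
      exact ⟨x, hx, hv⟩
    choose xs hxsmem hxsg using hseq
    obtain ⟨xst, hxstmem, κ, hκ, hκt⟩ := (isCompact_Icc).tendsto_subseq hxsmem
    -- g along the subsequence tends to k
    have hgtend : Tendsto (fun n => g (xs (κ n))) atTop (𝓝 k) := by
      have hlow : ∀ n, k - 1/(κ n + 1) < g (xs (κ n)) := fun n => hxsg (κ n)
      have h0 : Tendsto (fun n : ℕ => k - 1/((κ n : ℝ) + 1)) atTop (𝓝 k) := by
        have h1 : Tendsto (fun n : ℕ => 1/((n:ℝ)+1)) atTop (𝓝 0) :=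
          tendsto_one_div_add_atTop_nhds_zero_nat
        have h2 : Tendsto (fun n : ℕ => 1/((κ n : ℝ)+1)) atTop (𝓝 0) :=
          h1.comp hκ.tendsto_atTop
        have := tendsto_const_nhds (x := k) (f := atTop (α := ℕ)) |>.sub h2
        simpa using this
      refine tendsto_of_tendsto_of_tendsto_of_le_of_le h0 tendsto_const_nhds
        (fun n => (hlow n).le) (fun n => hgle _ (hxsmem (κ n)))
    rcases le_or_gt xst (usup f c σ) with hcase | hcase
    · -- cluster point below the plateau top
      set qn : ℕ → ℝ := fun n => min (min (cplus f c) (timp f y (xs (κ n)))) k with hqn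
      have hqnI : ∀ n, qn n ∈ I01 := fun n => hgmem _ (hxsmem (κ n))
      obtain ⟨qst, hqstI, κ2, hκ2, hκ2t⟩ :=
        (isCompact_Icc (a := (0:ℝ)) (b := 1)).tendsto_subseq hqnI
      have hfyq : ∀ n, f y (qn n) ≤ xs (κ n) := by
        intro n
        have h1 : qn n ≤ timp f y (xs (κ n)) :=
          le_trans (min_le_left _ _) (min_le_right _ _)
        exact le_trans (fmono2 hf hyI (hqnI n)
          (timp_mem hf hyI (Icc_sub_I01 hf hc (hxsmem (κ n))).1) h1)
          (f_timp_le hf hyI (Icc_sub_I01 hf hc (hxsmem (κ n))).1)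
      -- pass to the limit along κ2
      have ht1 : Tendsto (fun n => f y (qn (κ2 n))) atTop (𝓝 (f y qst)) :=
        ftendsto hf hyI hqstI (fun _ => hyI) (fun n => hqnI (κ2 n))
          tendsto_const_nhds hκ2t
      have ht2 : Tendsto (fun n => xs (κ (κ2 n))) atTop (𝓝 xst) :=
        hκt.comp hκ2.tendsto_atTop
      have hfyqst : f y qst ≤ xst :=
        le_of_tendsto_of_tendsto' ht1 ht2 (fun n => hfyq (κ2 n))
      -- k ≤ qst
      have hgq : ∀ n, g (xs (κ (κ2 n))) ≤ qn (κ2 n) := by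
        intro n
        exact f_le_right hf (hσm _ (hxsmem (κ (κ2 n)))) (hqnI (κ2 n))
      have hkq : k ≤ qst :=
        le_of_tendsto_of_tendsto' (hgtend.comp hκ2.tendsto_atTop) hκ2t hgq
      have : f y k ≤ usup f c σ :=
        le_trans (fmono2 hf hyI hkI hqstI hkq) (le_trans hfyqst hcase)
      exact absurd this (not_le_of_gt hw)
    · -- cluster point above the plateau : contradiction via idempotents
      set z := (usup f c σ + xst)/2 with hz
      have huz : usup f c σ < z := by
        rw [hz]; linarith
      have hzx : z < xst := by
        rw [hz]; linarith
      have hzIcc : z ∈ Set.Icc (cminus f c) (cplus f c) :=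
        ⟨le_trans huIcc.1 huz.le, le_trans hzx.le hxstmem.2⟩
      have hev : ∀ᶠ n in atTop, z < xs (κ n) :=
        hκt.eventually (eventually_gt_nhds hzx)
      have hbound : ∀ᶠ n in atTop, g (xs (κ n)) ≤ f (σ z) k := by
        filter_upwards [hev] with n hn
        calc g (xs (κ n)) ≤ f (σ (xs (κ n))) k :=
              fmono2 hf (hσm _ (hxsmem (κ n))) (hgmem _ (hxsmem (κ n))) hkI
                (min_le_right _ _)
          _ ≤ f (σ z) k :=
              fmono1 hf (hσm _ (hxsmem (κ n))) (hσm z hzIcc) hkI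
                (sigma_anti hf hc hσ hzIcc (hxsmem (κ n)) hn.le)
      have hkfz : k ≤ f (σ z) k := le_of_tendsto hgtend hbound
      have hfzk : f k (σ z) = k := by
        rw [fcomm hf]
        exact le_antisymm (f_le_right hf (hσm z hzIcc) hkI) hkfz
      obtain ⟨e, heI, hee, hke, heσ⟩ := exists_idem_between hf (hσm z hzIcc) hkI hfzk
      rcases eq_or_lt_of_le (le_trans heσ (hσ.1.1 z hzIcc).2) with heB | heB
      · -- e = B forces z in the plateau
        have hσzB : σ z = cplus f c :=
          le_antisymm (hσ.1.1 z hzIcc).2 (heB ▸ heσ)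
        have : z ≤ usup f c σ := le_csSup plat_bdd ⟨hzIcc, hσzB⟩
        exact absurd this (not_le_of_gt huz)
      · exact no_idem_between hf hc heI hee
          (lt_of_le_of_lt huIcc.1 (lt_of_lt_of_le huk hke)) heB
  -- apply SL with k := σ y
  rcases le_or_gt (σ y) (usup f c σ) with h | h
  · exact le_trans (f_le_right hf hyI hσyI) h
  · exact SL (σ y) hσyIcc h le_rfl

end block

section main

variable (hf : IsContTNorm f) {φ ψ : ℝ → ℝ}
include hf

lemma phi_anti (hφ : IsFuzzyLowerSet f φ) {x y : ℝ} (hx : x ∈ I01) (hy : y ∈ I01)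
    (hxy : x ≤ y) : φ y ≤ φ x := by
  have h := hφ.2 y hy x hx
  rwa [timp_one_of_le hf hx hxy, fone hf (hφ.1 y hy)] at h

lemma per_c (hφ : IsFuzzyLowerSet f φ)
    (hF3 : ∀ c ∈ I01, f c c ≠ c → cminus f c < φ (cminus f c) →
      IsFlatIdealOn f c (fun x => min (cplus f c) (φ x)))
    (hψ : IsFuzzyUpperSet f ψ) {c : ℝ} (hc : c ∈ I01) :
    f (φ c) (ψ c) ≤
      sSup ((fun x => min (φ x) (ψ x)) '' {x | x ∈ I01 ∧ cplus f x ≤ φ x}) := by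
  have hφc : φ c ∈ I01 := hφ.1 c hc
  have hψc : ψ c ∈ I01 := hψ.1 c hc
  have hbdd : BddAbove ((fun x => min (φ x) (ψ x)) '' {x | x ∈ I01 ∧ cplus f x ≤ φ x}) := by
    refine ⟨1, ?_⟩
    rintro v ⟨x, hx, rfl⟩
    exact le_trans (min_le_left _ _) (hφ.1 x hx.1).2
  have hwit : ∀ x, x ∈ I01 → cplus f x ≤ φ x → f (φ c) (ψ c) ≤ φ x →
      f (φ c) (ψ c) ≤ ψ x →
      f (φ c) (ψ c) ≤
        sSup ((fun x => min (φ x) (ψ x)) '' {x | x ∈ I01 ∧ cplus f x ≤ φ x}) := by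
    intro x hx hK h1 h2
    exact le_trans (le_min h1 h2) (le_csSup hbdd ⟨x, ⟨hx, hK⟩, rfl⟩)
  have ht1 : f (φ c) (ψ c) ≤ φ c := f_le_left hf hφc hψc
  have ht2 : f (φ c) (ψ c) ≤ ψ c := f_le_right hf hφc hψc
  by_cases hK : cplus f c ≤ φ c
  · exact hwit c hc hK ht1 ht2
  · push_neg at hK
    by_cases h2 : cplus f (φ c) ≤ c
    · -- case 2-ii : the witness is d = φ c itself
      have hdc : φ c ≤ c := le_trans (le_cplus hf hφc) h2
      have hφd : φ c ≤ φ (φ c) := phi_anti hf hφ hφc hc hdc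
      have hψd : f (φ c) (ψ c) ≤ ψ (φ c) := by
        refine le_trans ?_ (hψ.2 c hc (φ c) hφc)
        exact fmono1 hf hφc (timp_mem hf hc hφc.1) hψc
          (le_timp hf hφc (f_le_right hf hc hφc))
      have hdK : cplus f (φ c) ≤ φ (φ c) := by
        by_cases hdi : f (φ c) (φ c) = φ c
        · rw [cplus_of_idem hf hφc hdi]; exact hφd
        · have hb'd : cminus f (φ c) < φ c := b_lt_c hf hφc hdi
          have hφb' : φ (φ c) ≤ φ (cminus f (φ c)) :=
            phi_anti hf hφ (bB_mem_b hf hφc) hφc (cminus_le hf hφc)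
          have hflat' := hF3 (φ c) hφc hdi (lt_of_lt_of_le hb'd (le_trans hφd hφb'))
          have hB'Icc : cplus f (φ c) ∈
              Set.Icc (cminus f (φ c)) (cplus f (φ c)) := ⟨b_le_B hf hφc, le_rfl⟩
          have hB'I : cplus f (φ c) ∈ I01 := bB_mem_B hf hφc
          have hφB' : φ c ≤ φ (cplus f (φ c)) := phi_anti hf hφ hB'I hc h2
          have hdleu : φ c ≤ usup f (φ c) (fun x => min (cplus f (φ c)) (φ x)) := by
            rcases eq_or_lt_of_le (usup_mem_Icc hf hφc hflat').2 with hu | hu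
            · rw [hu]; exact le_cplus hf hφc
            · have hk2 := key_lemma hf hφc hflat' hdi hB'Icc hu
              have hσ'B'Icc := hflat'.1.1 _ hB'Icc
              have hσ'B'I : min (cplus f (φ c)) (φ (cplus f (φ c))) ∈ I01 :=
                Icc_sub_I01 hf hφc hσ'B'Icc
              rw [f_idem_min hf hB'I (B_idem hf hφc) hσ'B'I,
                min_eq_right hσ'B'Icc.2] at hk2
              exact le_trans (le_min (le_cplus hf hφc) hφB') hk2
          have hdIcc : φ c ∈ Set.Icc (cminus f (φ c)) (cplus f (φ c)) :=
            ⟨cminus_le hf hφc, le_cplus hf hφc⟩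
          have huP : usup f (φ c) (fun x => min (cplus f (φ c)) (φ x)) ∈
              plat f (φ c) (fun x => min (cplus f (φ c)) (φ x)) :=
            ⟨usup_mem_Icc hf hφc hflat', sigma_usup hf hφc hflat' hdi⟩
          have hσ'd := plat_down hf hφc hflat' hdIcc huP hdleu
          exact min_eq_left_iff.mp hσ'd
      exact hwit (φ c) hφc hdK (le_trans ht1 hφd) hψd
    · -- case 2-i : the witness is the plateau top of the block of c
      push_neg at h2
      have hci : f c c ≠ c := by
        intro hcc
        exact absurd (le_trans (cplus_le hf hc (le_of_lt
          (lt_of_lt_of_le hK (le_of_eq (cplus_of_idem hf hc hcc)))) hcc) le_rfl)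
          (not_le_of_gt h2)
      have hbφ : cminus f c < φ c := by
        by_contra hle
        push_neg at hle
        exact absurd (le_trans (cplus_le hf (bB_mem_b hf hc) hle (b_idem hf hc))
          (cminus_le hf hc)) (not_le_of_gt h2)
      have hφb : φ c ≤ φ (cminus f c) :=
        phi_anti hf hφ (bB_mem_b hf hc) hc (cminus_le hf hc)
      have hflat := hF3 c hc hci (lt_of_lt_of_le hbφ hφb)
      have huIcc := usup_mem_Icc hf hc hflat
      have huI : usup f c (fun x => min (cplus f c) (φ x)) ∈ I01 :=
        Icc_sub_I01 hf hc huIcc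
      have hcIcc : c ∈ Set.Icc (cminus f c) (cplus f c) :=
        ⟨cminus_le hf hc, le_cplus hf hc⟩
      have huP : usup f c (fun x => min (cplus f c) (φ x)) ∈
          plat f c (fun x => min (cplus f c) (φ x)) :=
        ⟨huIcc, sigma_usup hf hc hflat hci⟩
      have huc : usup f c (fun x => min (cplus f c) (φ x)) < c := by
        by_contra hcu
        push_neg at hcu
        have hσc := plat_down hf hc hflat hcIcc huP hcu
        exact absurd (min_eq_left_iff.mp hσc) (not_le_of_gt hK)
      have hk2 := key_lemma hf hc hflat hci hcIcc huc
      have hσc : min (cplus f c) (φ c) = φ c := min_eq_right (le_of_lt hK)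
      rw [hσc] at hk2
      have hφu : cplus f c ≤ φ (usup f c (fun x => min (cplus f c) (φ x))) :=
        min_eq_left_iff.mp huP.2
      have huK : cplus f (usup f c (fun x => min (cplus f c) (φ x))) ≤
          φ (usup f c (fun x => min (cplus f c) (φ x))) :=
        le_trans (cplus_le hf (bB_mem_B hf hc) huIcc.2 (B_idem hf hc)) hφu
      have hψu : f (φ c) (ψ c) ≤ ψ (usup f c (fun x => min (cplus f c) (φ x))) := by
        refine le_trans ?_ (hψ.2 c hc _ huI)
        exact fmono1 hf hφc (timp_mem hf hc huI.1) hψc (le_timp hf hφc hk2)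
      exact hwit _ huI huK
        (le_trans ht1 (le_of_lt (lt_of_lt_of_le hK hφu))) hψu

end main

end TN

/-- if a fuzzy lower set `φ` of `([0,1],d_L)` satisfies (F2) and (F3), and
`K_φ = {x ∈ [0,1] | φ x ≥ x⁺}`, then for every fuzzy upper set `ψ` of `([0,1],d_L)`,
`φ ⊗ ψ = sup_{x ∈ K_φ} min (φ x) (ψ x)`. -/
theorem tensor_eq_sup_over_Kphi (f : ℝ → ℝ → ℝ) (hf : IsContTNorm f)
    (φ : ℝ → ℝ) (hφ : IsFuzzyLowerSet f φ)
    (hF2 : ∀ c ∈ I01, cplus f c ≤ φ c → f (φ c) (φ c) = φ c)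
    (hF3 : ∀ c ∈ I01, f c c ≠ c → cminus f c < φ (cminus f c) →
      IsFlatIdealOn f c (fun x => min (cplus f c) (φ x)))
    (ψ : ℝ → ℝ) (hψ : IsFuzzyUpperSet f ψ) :
    sSup ((fun x => f (φ x) (ψ x)) '' I01) =
      sSup ((fun x => min (φ x) (ψ x)) '' {x | x ∈ I01 ∧ cplus f x ≤ φ x}) := by
  apply le_antisymm
  · refine csSup_le ⟨f (φ 0) (ψ 0), ⟨0, TN.zero_mem, rfl⟩⟩ ?_
    rintro v ⟨x, hx, rfl⟩
    exact TN.per_c hf hφ hF3 hψ hx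
  · have hKzero : (0:ℝ) ∈ {x | x ∈ I01 ∧ cplus f x ≤ φ x} := by
      refine ⟨TN.zero_mem, ?_⟩
      rw [TN.cplus_of_idem hf TN.zero_mem (TN.f_zero_zero hf)]
      exact (hφ.1 0 TN.zero_mem).1
    refine csSup_le ⟨min (φ 0) (ψ 0), ⟨0, hKzero, rfl⟩⟩ ?_
    rintro v ⟨x, hx, rfl⟩
    have hidem := hF2 x hx.1 hx.2
    have hmin : min (φ x) (ψ x) = f (φ x) (ψ x) :=
      (TN.f_idem_min hf (hφ.1 x hx.1) hidem (hψ.1 x hx.1)).symm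
    rw [show (fun x => min (φ x) (ψ x)) x = min (φ x) (ψ x) from rfl, hmin]
    refine le_csSup ?_ ⟨x, hx.1, rfl⟩
    refine ⟨1, ?_⟩
    rintro v ⟨z, hz, rfl⟩
    exact (TN.fmem hf (hφ.1 z hz) (hψ.1 z hz)).2
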